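/- In the AllocateAndEliminateCritical procedure (k ≥ 2): if every agent whose bundle is augmented receives at most k−1 additional goods and started with a singleton bundle, then for every pair of agents i ≠ j: either X̃_j has size at most k (so i is trivially EFkX towards j), or X̃_j = X_j and i's (k+1)/(k+2)-EFkX guarantee towards j from the input allocation is preserved since v_i(X̃_i) ≥ v_i(X_i). Hence the output allocation is (k+1)/(k+2)-EFkX. -/
import Mathlib


open Finset

/-- An allocation `X` is `α`-EFkX: for all distinct agents `i j` and every
`Y ⊆ X j` with `|Y| = k`, `v i (X i) ≥ α · v i (X j \ Y)`. -/
def isEFkX {ι G : Type*} [DecidableEq G] (v : ι → G → ℝ) (X : ι → Finset G)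
    (k : ℕ) (α : ℝ) : Prop :=
  ∀ i j, i ≠ j → ∀ Y ⊆ X j, Y.card = k →
    α * ∑ g ∈ X j \ Y, v i g ≤ ∑ g ∈ X i, v i g

/-- AllocateAndEliminateCritical preserves `(k+1)/(k+2)`-EFkX for
`k ≥ 2`: each augmented bundle started as a singleton and gained at most `k−1`
goods (so has size at most `k`), values never decrease, and untouched bundles keep
the original guarantee. -/
theorem stmt19 {ι G : Type*} [DecidableEq G] (k : ℕ) (hk : 2 ≤ k)
    (v : ι → G → ℝ) (hv : ∀ i g, 0 ≤ v i g)
    (X Xt : ι → Finset G)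
    (hEF : isEFkX v X k (((k : ℝ) + 1) / ((k : ℝ) + 2)))
    (hmono : ∀ i, ∑ g ∈ X i, v i g ≤ ∑ g ∈ Xt i, v i g)
    (hcases : ∀ j, Xt j = X j ∨
      ((X j).card = 1 ∧ X j ⊆ Xt j ∧ (Xt j).card ≤ (X j).card + (k - 1))) :
    isEFkX v Xt k (((k : ℝ) + 1) / ((k : ℝ) + 2)) := by
  intro i j hij Y hY hYc
  rcases hcases j with h | ⟨h1, hsub, hle⟩
  · rw [h] at hY ⊢
    exact (hEF i j hij Y hY hYc).trans (hmono i)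
  · have hempty : Xt j \ Y = ∅ := by
      rw [← Finset.card_eq_zero]
      have := Finset.card_sdiff_of_subset hY
      rw [this, hYc]
      omega
    rw [hempty]
    simp only [Finset.sum_empty, mul_zero]
    exact Finset.sum_nonneg fun g _ => hv i g
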